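/- Let Γ be a profinite group isomorphic to ℤ_p, and for n ≥ 0 let Γ_n = Γ^{p^n} be the unique open subgroup of index p^n. Let M be a finitely generated module over the Iwasawa algebra ℤ_p[[Γ]] and r a non-negative integer such that for every n ≥ 0, the coinvariants M_{Γ_n} form a free ℤ_p-module of rank r·p^n. Then M is a free ℤ_p[[Γ]]-module of rank r. -/

import Mathlib

/-!
STATEMENT 0. Let `Γ ≅ ℤ_p` and identify the Iwasawa algebra `ℤ_p[[Γ]]` with
`ℤ_p[[T]]` via `γ ↦ 1 + T`.  The subgroup `Γ_n = Γ^{p^n}` then corresponds to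
the element `ω_n = (1+T)^{p^n} - 1`, and the coinvariants `M_{Γ_n}` are
`M / ω_n M`.  If `M` is a finitely generated `ℤ_p[[Γ]]`-module such that
`M_{Γ_n}` is a free `ℤ_p`-module of rank `r·p^n` for all `n ≥ 0`, then
`M` is a free `ℤ_p[[Γ]]`-module of rank `r`.
-/

open PowerSeries Filter

namespace Stmt0Aux

variable {p : ℕ} [Fact p.Prime]

lemma p_inv_lt_one : ((p : ℝ))⁻¹ < 1 := by
  have h : (1:ℝ) < p := by exact_mod_cast (Fact.out : p.Prime).one_lt
  rw [inv_lt_one_iff₀]; right; exact h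

lemma p_inv_nonneg : (0:ℝ) ≤ ((p : ℝ))⁻¹ := by positivity

lemma pmul_norm_le (j : ℕ) (c : ℤ_[p]) : ‖(p:ℤ_[p])^j * c‖ ≤ ((p:ℝ)⁻¹)^j := by
  rw [norm_mul]
  have h1 : ‖((p:ℤ_[p]))^j‖ = ((p:ℝ)⁻¹)^j := by
    induction j with
    | zero => simp
    | succ n ih => rw [pow_succ, pow_succ, norm_mul, ih, PadicInt.norm_p]
  rw [h1]
  exact mul_le_of_le_one_right (by positivity) (PadicInt.norm_le_one c)

lemma summable_pmul (c : ℕ → ℤ_[p]) : Summable (fun j => (p:ℤ_[p])^j * c j) :=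
  Summable.of_norm_bounded (summable_geometric_of_lt_one (p_inv_nonneg (p := p)) (p_inv_lt_one (p := p)))
    (fun j => pmul_norm_le j (c j))

lemma tsum_telescope' (a : ℕ → ℤ_[p]) :
    ∑' j, ((p:ℤ_[p])^j * a j - (p:ℤ_[p])^(j+1) * a (j+1)) = a 0 := by
  set b : ℕ → ℤ_[p] := fun j => (p:ℤ_[p])^j * a j with hb
  have hnorm : ∀ j, ‖b j - b (j+1)‖ ≤ 2 * ((p:ℝ)⁻¹)^j := by
    intro j
    calc ‖b j - b (j+1)‖ ≤ ‖b j‖ + ‖b (j+1)‖ := norm_sub_le _ _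
      _ ≤ ((p:ℝ)⁻¹)^j + ((p:ℝ)⁻¹)^(j+1) := by
          exact add_le_add (pmul_norm_le _ _) (pmul_norm_le _ _)
      _ ≤ ((p:ℝ)⁻¹)^j + ((p:ℝ)⁻¹)^j := by
          refine add_le_add le_rfl ?_
          exact pow_le_pow_of_le_one (p_inv_nonneg (p := p)) (p_inv_lt_one (p := p)).le (Nat.le_succ j)
      _ = 2 * ((p:ℝ)⁻¹)^j := by ring
  have hsum : Summable fun j => ‖b j - b (j+1)‖ :=
    Summable.of_nonneg_of_le (fun j => norm_nonneg _) hnorm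
      ((summable_geometric_of_lt_one (p_inv_nonneg (p := p)) (p_inv_lt_one (p := p))).mul_left 2)
  have htend : Tendsto b atTop (nhds 0) := by
    apply squeeze_zero_norm (fun j => pmul_norm_le j (a j))
    exact tendsto_pow_atTop_nhds_zero_of_lt_one (p_inv_nonneg (p := p)) (p_inv_lt_one (p := p))
  have hhs : HasSum (fun j => b j - b (j+1)) (a 0) := by
    rw [hasSum_iff_tendsto_nat_of_summable_norm hsum]
    have heq : ∀ n, ∑ i ∈ Finset.range n, (b i - b (i+1)) = b 0 - b n :=
      fun n => Finset.sum_range_sub' b n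
    simp only [heq]
    have : b 0 = a 0 := by simp [hb]
    rw [← this]
    simpa using tendsto_const_nhds.sub htend
  exact hhs.tsum_eq

lemma coeff_one_add_X_pow (N k : ℕ) :
    coeff k ((1 + X : ℤ_[p]⟦X⟧) ^ N) = (N.choose k : ℤ_[p]) := by
  rw [add_comm (1 : ℤ_[p]⟦X⟧) X, add_pow, map_sum]
  have h1 : ∀ m ∈ Finset.range (N+1),
      coeff k ((X:ℤ_[p]⟦X⟧)^m * 1^(N-m) * (N.choose m : ℤ_[p]⟦X⟧))
        = if k = m then (N.choose m : ℤ_[p]) else 0 := by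
    intro m _
    rw [one_pow, mul_one, ← map_natCast C (N.choose m), mul_comm, coeff_C_mul,
      coeff_X_pow, mul_ite, mul_one, mul_zero]
  rw [Finset.sum_congr rfl h1, Finset.sum_ite_eq (Finset.range (N+1)) k
    (fun m => (N.choose m : ℤ_[p]))]
  by_cases hk : k ∈ Finset.range (N+1)
  · rw [if_pos hk]
  · rw [if_neg hk, Nat.choose_eq_zero_of_lt, Nat.cast_zero]
    simpa using Nat.lt_of_succ_le (not_lt.mp (by simpa [Finset.mem_range] using hk))



lemma omega_eq_aux (n : ℕ) : ∃ h : ℤ_[p]⟦X⟧,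
    ((1 + X) ^ p ^ n - 1 : ℤ_[p]⟦X⟧) = X ^ p ^ n + (p : ℤ_[p]⟦X⟧) * h := by
  classical
  have hp : p.Prime := Fact.out
  have hq : p ^ n ≠ 0 := (pow_pos hp.pos n).ne'
  have hdvd : ∀ k, (p:ℤ_[p]) ∣ coeff k (((1 + X) ^ p ^ n - 1 - X ^ p ^ n : ℤ_[p]⟦X⟧)) := by
    intro k
    rw [map_sub, map_sub, coeff_one_add_X_pow, coeff_X_pow, coeff_one]
    rcases Nat.eq_zero_or_pos k with rfl | hk0
    · simp [hq, eq_comm, hp.ne_zero]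
    · by_cases hkq : k = p ^ n
      · subst hkq; simp [hq, hk0.ne', hp.ne_zero]
      · rw [if_neg hkq, if_neg (hk0.ne' : k ≠ 0)]
        simp only [sub_zero]
        exact_mod_cast Nat.cast_dvd_cast (hp.dvd_choose_pow (hk0.ne') hkq)
  choose d hd using hdvd
  refine ⟨PowerSeries.mk d, ?_⟩
  ext k
  have h1 := hd k
  rw [map_sub, map_sub] at h1
  rw [map_sub, map_add]
  have h2 : coeff k ((p : ℤ_[p]⟦X⟧) * PowerSeries.mk d) = (p:ℤ_[p]) * d k := by
    rw [← map_natCast C p, coeff_C_mul, coeff_mk]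
  rw [h2]
  linear_combination h1

lemma eq_zero_of_omega_dvd (f : ℤ_[p]⟦X⟧)
    (h : ∀ n : ℕ, ((1 + X) ^ p ^ n - 1 : ℤ_[p]⟦X⟧) ∣ f) : f = 0 := by
  have hp : p.Prime := Fact.out
  ext j
  rw [map_zero]
  have key : ∀ m : ℕ, (p:ℤ_[p])^m ∣ coeff j f := by
    intro m
    set n := j + m with hn
    obtain ⟨g, hg⟩ := h n
    have main : (p:ℤ_[p])^(n - j) ∣ coeff j f := by
      rw [hg, coeff_mul]
      apply Finset.dvd_sum
      rintro ⟨a, b⟩ hab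
      have hab' : a + b = j := Finset.HasAntidiagonal.mem_antidiagonal.mp hab
      have ha : a ≤ j := by omega
      apply Dvd.dvd.mul_right
      rw [map_sub, coeff_one_add_X_pow, coeff_one]
      rcases Nat.eq_zero_or_pos a with rfl | ha0
      · simp
      · rw [if_neg (ha0.ne' : a ≠ 0), sub_zero]
        have hlt : a < p ^ n := lt_of_le_of_lt (ha.trans (by omega)) (Nat.lt_pow_self (n := n) hp.one_lt)
        have hm : multiplicity p a ≤ j := by
          have h1 : p ^ multiplicity p a ∣ a := pow_multiplicity_dvd p a
          have h2 : p ^ multiplicity p a ≤ a := Nat.le_of_dvd ha0 h1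
          have h3 : multiplicity p a < p ^ multiplicity p a := Nat.lt_pow_self hp.one_lt
          omega
        have hle : ((n - j : ℕ) : ℕ∞) ≤ emultiplicity p ((p^n).choose a) := by
          rw [hp.emultiplicity_choose_prime_pow hlt.le (ha0.ne')]
          exact_mod_cast Nat.sub_le_sub_left hm n
        have hdvd : p ^ (n - j) ∣ (p^n).choose a := pow_dvd_of_le_emultiplicity hle
        exact_mod_cast Nat.cast_dvd_cast hdvd
    rwa [show n - j = m by omega] at main
  have hnorm : ∀ m : ℕ, ‖coeff j f‖ ≤ ((p:ℝ)⁻¹)^m := by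
    intro m
    obtain ⟨c, hc⟩ := key m
    rw [hc]
    exact pmul_norm_le m c
  have hle0 : ‖coeff j f‖ ≤ 0 :=
    ge_of_tendsto' (tendsto_pow_atTop_nhds_zero_of_lt_one (p_inv_nonneg (p := p))
      (p_inv_lt_one (p := p))) hnorm
  exact norm_le_zero_iff.mp hle0

lemma pi_component_mem {r : ℕ} {I : Ideal (ℤ_[p]⟦X⟧)} {k : Fin r → ℤ_[p]⟦X⟧}
    (hk : k ∈ I • (⊤ : Submodule (ℤ_[p]⟦X⟧) (Fin r → ℤ_[p]⟦X⟧))) (i : Fin r) : k i ∈ I := by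
  refine Submodule.smul_induction_on hk (fun c hc v _ => ?_) (fun x y hx hy => ?_)
  · simpa using I.mul_mem_right (v i) hc
  · simpa using I.add_mem hx hy

lemma division (q : ℕ) (hq : 0 < q) (h : ℤ_[p]⟦X⟧) (f : ℤ_[p]⟦X⟧) :
    ∃ (c : Fin q → ℤ_[p]) (d : ℤ_[p]⟦X⟧),
      f = (∑ i : Fin q, c i • (X : ℤ_[p]⟦X⟧) ^ (i : ℕ)) + d * (X ^ q + (p : ℤ_[p]⟦X⟧) * h) := by
  classical
  set ω : ℤ_[p]⟦X⟧ := X ^ q + (p : ℤ_[p]⟦X⟧) * h with hω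
  set sh : ℤ_[p]⟦X⟧ → ℤ_[p]⟦X⟧ := fun u => PowerSeries.mk fun i => coeff (i + q) u
    with hshdef
  have hsh : ∀ (u : ℤ_[p]⟦X⟧) (m : ℕ),
      coeff m (X ^ q * sh u) = if q ≤ m then coeff m u else 0 := by
    intro u m
    rw [coeff_X_pow_mul']
    split_ifs with hm
    · rw [hshdef, coeff_mk, Nat.sub_add_cancel hm]
    · rfl
  set tr : ℤ_[p]⟦X⟧ → ℤ_[p]⟦X⟧ :=
    fun u => ∑ i ∈ Finset.range q, C (coeff i u) * X ^ i with htrdef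
  have htr : ∀ (u : ℤ_[p]⟦X⟧) (m : ℕ),
      coeff m (tr u) = if m < q then coeff m u else 0 := by
    intro u m
    rw [htrdef]
    simp only [map_sum, coeff_C_mul, coeff_X_pow, mul_ite, mul_one, mul_zero]
    rw [Finset.sum_ite_eq (Finset.range q) m (fun i => coeff i u)]
    simp [Finset.mem_range]
  have hdecomp : ∀ u : ℤ_[p]⟦X⟧, u = tr u + X ^ q * sh u := by
    intro u
    ext m
    rw [map_add, htr, hsh]
    rcases lt_or_ge m q with hm | hm
    · rw [if_pos hm, if_neg (by omega)]; ring
    · rw [if_neg (by omega), if_pos hm]; ring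
  set g : ℕ → ℤ_[p]⟦X⟧ := fun j => Nat.rec f (fun _ u => -h * sh u) j with hgdef
  have hg0 : g 0 = f := rfl
  have hgs : ∀ j, g (j+1) = -h * sh (g j) := fun j => rfl
  have hkey : ∀ j, g j = tr (g j) + sh (g j) * ω + (p : ℤ_[p]⟦X⟧) * g (j+1) := by
    intro j
    conv_lhs => rw [hdecomp (g j)]
    rw [hgs, hω]; ring
  refine ⟨fun i => ∑' j, (p:ℤ_[p])^j * coeff (i:ℕ) (g j),
          PowerSeries.mk fun i => ∑' j, (p:ℤ_[p])^j * coeff i (sh (g j)), ?_⟩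
  ext m
  rw [map_add]
  have hterm1 : coeff m
        (∑ i : Fin q, (∑' j, (p:ℤ_[p])^j * coeff (i:ℕ) (g j)) • (X:ℤ_[p]⟦X⟧) ^ (i:ℕ))
      = ∑' j, (p:ℤ_[p])^j * coeff m (tr (g j)) := by
    rw [map_sum]
    simp only [LinearMap.map_smul, coeff_X_pow, smul_eq_mul, mul_ite, mul_one, mul_zero]
    rw [show (∑ i : Fin q, if m = (i:ℕ) then (∑' j, (p:ℤ_[p])^j * coeff (i:ℕ) (g j)) else 0)
        = ∑ i ∈ Finset.range q, if m = i then (∑' j, (p:ℤ_[p])^j * coeff i (g j)) else 0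
      from Fin.sum_univ_eq_sum_range (fun i => if m = i then (∑' j, (p:ℤ_[p])^j * coeff i (g j)) else 0) q]
    rw [Finset.sum_ite_eq (Finset.range q) m
      (fun i => ∑' j, (p:ℤ_[p])^j * coeff i (g j))]
    by_cases hm : m < q
    · rw [if_pos (Finset.mem_range.mpr hm)]
      exact tsum_congr fun j => by rw [htr, if_pos hm]
    · rw [if_neg (fun hc => hm (Finset.mem_range.mp hc))]
      symm
      calc (∑' j, (p:ℤ_[p])^j * coeff m (tr (g j)))
          = ∑' (_ : ℕ), (0:ℤ_[p]) := tsum_congr fun j => by rw [htr, if_neg hm, mul_zero]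
        _ = 0 := tsum_zero
  have hterm2 : coeff m
        ((PowerSeries.mk fun i => ∑' j, (p:ℤ_[p])^j * coeff i (sh (g j))) * ω)
      = ∑' j, (p:ℤ_[p])^j * coeff m (sh (g j) * ω) := by
    rw [coeff_mul]
    have h1 : ∀ x ∈ Finset.HasAntidiagonal.antidiagonal m,
        coeff x.1 (PowerSeries.mk fun i => ∑' j, (p:ℤ_[p])^j * coeff i (sh (g j)))
          * coeff x.2 ω
        = ∑' j, (p:ℤ_[p])^j * coeff x.1 (sh (g j)) * coeff x.2 ω := by
      intro x _
      rw [coeff_mk]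
      exact ((summable_pmul (fun j => coeff x.1 (sh (g j)))).tsum_mul_right
        (coeff x.2 ω)).symm
    rw [Finset.sum_congr rfl h1]
    rw [← Summable.tsum_finsetSum (fun x _ => by
      have := summable_pmul (fun j => coeff x.1 (sh (g j)) * coeff x.2 ω)
      simpa [mul_assoc] using this)]
    refine tsum_congr fun j => ?_
    rw [coeff_mul, Finset.mul_sum]
    exact Finset.sum_congr rfl fun x _ => (mul_assoc _ _ _)
  rw [hterm1, hterm2, ← Summable.tsum_add (summable_pmul _) (summable_pmul _)]
  have hco : ∀ j, (p:ℤ_[p])^j * coeff m (tr (g j)) + (p:ℤ_[p])^j * coeff m (sh (g j) * ω)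
      = (p:ℤ_[p])^j * coeff m (g j) - (p:ℤ_[p])^(j+1) * coeff m (g (j+1)) := by
    intro j
    have hkc := congrArg (coeff m) (hkey j)
    rw [map_add, map_add] at hkc
    have hp' : coeff m ((p : ℤ_[p]⟦X⟧) * g (j+1)) = (p:ℤ_[p]) * coeff m (g (j+1)) := by
      rw [← map_natCast C p, coeff_C_mul]
    rw [hp'] at hkc
    linear_combination (-(p:ℤ_[p])^j) * hkc
  rw [tsum_congr hco, tsum_telescope' (fun j => coeff m (g j))]
  rw [hg0]

end Stmt0Aux


open Stmt0Aux in
set_option maxHeartbeats 1000000 in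
theorem stmt_0 (p : ℕ) [Fact p.Prime] (r : ℕ)
    (M : Type*) [AddCommGroup M]
    [Module (PowerSeries ℤ_[p]) M] [Module ℤ_[p] M]
    [IsScalarTower ℤ_[p] (PowerSeries ℤ_[p]) M]
    [Module.Finite (PowerSeries ℤ_[p]) M]
    (hfree : ∀ n : ℕ,
      Nonempty ((M ⧸ (Ideal.span {((1 + X) ^ p ^ n - 1 : PowerSeries ℤ_[p])} •
          (⊤ : Submodule (PowerSeries ℤ_[p]) M)))
        ≃ₗ[ℤ_[p]] (Fin (r * p ^ n) → ℤ_[p]))) :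
    Nonempty (M ≃ₗ[PowerSeries ℤ_[p]] (Fin r → PowerSeries ℤ_[p])) := by
  classical
  have hp : p.Prime := Fact.out
  obtain ⟨e0⟩ := hfree 0
  set N0 : Submodule (PowerSeries ℤ_[p]) M :=
    Ideal.span {((1 + X) ^ p ^ 0 - 1 : PowerSeries ℤ_[p])} • ⊤ with hN0
  let e0' : (M ⧸ N0) ≃ₗ[ℤ_[p]] (Fin r → ℤ_[p]) :=
    e0.trans (LinearEquiv.funCongrLeft ℤ_[p] ℤ_[p]
      ((finCongr (by simp) : Fin r ≃ Fin (r * p ^ 0))))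
  choose mf hmf using fun i : Fin r =>
    Submodule.Quotient.mk_surjective N0 (e0'.symm (Pi.single i 1))
  set φ : (Fin r → PowerSeries ℤ_[p]) →ₗ[PowerSeries ℤ_[p]] M :=
    ∑ i : Fin r, (LinearMap.toSpanSingleton (PowerSeries ℤ_[p]) M (mf i)).comp
      (LinearMap.proj i) with hφdef
  have hφ : ∀ c, φ c = ∑ i : Fin r, c i • mf i := by
    intro c
    rw [hφdef]
    simp [LinearMap.toSpanSingleton_apply]
  -- surjectivity of φ
  have hsurj : Function.Surjective φ := by
    have hIJ : Ideal.span {((1 + X) ^ p ^ 0 - 1 : PowerSeries ℤ_[p])} ≤ Ideal.jacobson ⊥ := by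
      rw [IsLocalRing.jacobson_eq_maximalIdeal ⊥ bot_ne_top, Ideal.span_le,
        Set.singleton_subset_iff]
      show _ ∈ IsLocalRing.maximalIdeal _
      rw [IsLocalRing.mem_maximalIdeal, mem_nonunits_iff, isUnit_iff_constantCoeff]
      have hc : constantCoeff ((1 + X) ^ p ^ 0 - 1 : PowerSeries ℤ_[p]) = 0 := by
        simp
      rw [hc]
      exact not_isUnit_zero
    have h1 : (⊤ : Submodule (PowerSeries ℤ_[p]) M) ≤ LinearMap.range φ ⊔
        Ideal.span {((1 + X) ^ p ^ 0 - 1 : PowerSeries ℤ_[p])} • ⊤ := by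
      intro x _
      set b : Fin r → ℤ_[p] := e0' (Submodule.Quotient.mk (p := N0) x) with hbdef
      have h8 : Submodule.Quotient.mk (p := N0) (∑ i : Fin r, b i • mf i)
          = ∑ i : Fin r, b i • Submodule.Quotient.mk (p := N0) (mf i) := by
        rw [show Submodule.Quotient.mk (p := N0) (∑ i : Fin r, b i • mf i)
            = N0.mkQ (∑ i : Fin r, b i • mf i) from rfl, map_sum]
        exact Finset.sum_congr rfl fun i _ => Submodule.Quotient.mk_smul N0 (b i) (mf i)
      have h2 : Submodule.Quotient.mk (p := N0) x
          = Submodule.Quotient.mk (p := N0) (∑ i : Fin r, b i • mf i) := by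
        rw [h8]
        have h3 : Submodule.Quotient.mk (p := N0) x = e0'.symm b :=
          (LinearEquiv.symm_apply_apply e0' _).symm
        have h4 : b = ∑ i : Fin r, b i • (Pi.single i (1:ℤ_[p]) : Fin r → ℤ_[p]) := by
          refine (Finset.univ_sum_single b).symm.trans (Finset.sum_congr rfl fun i _ => ?_)
          rw [← Pi.single_smul, smul_eq_mul, mul_one]
        rw [h3]
        conv_lhs => rw [h4]
        rw [map_sum]
        exact Finset.sum_congr rfl fun i _ => by rw [map_smul, hmf i]
      have h5 : x - ∑ i : Fin r, b i • mf i ∈ N0 := (Submodule.Quotient.eq N0).mp h2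
      have h6 : (∑ i : Fin r, b i • mf i) ∈ LinearMap.range φ := by
        refine ⟨fun i => algebraMap ℤ_[p] (PowerSeries ℤ_[p]) (b i), ?_⟩
        rw [hφ]
        exact Finset.sum_congr rfl fun i _ => algebraMap_smul _ _ _
      have h7 : x = (∑ i : Fin r, b i • mf i) + (x - ∑ i : Fin r, b i • mf i) := by abel
      rw [h7]
      exact Submodule.add_mem _ (Submodule.mem_sup_left h6)
        (Submodule.mem_sup_right (by rw [← hN0]; exact h5))
    have h2 := Submodule.le_of_le_smul_of_le_jacobson_bot
      (Module.finite_def.mp ‹Module.Finite (PowerSeries ℤ_[p]) M›) hIJ h1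
    exact LinearMap.range_eq_top.mp (top_le_iff.mp h2)
  -- injectivity of φ
  have hker : LinearMap.ker φ = ⊥ := by
    refine (Submodule.eq_bot_iff _).mpr fun k hk => ?_
    have hcomp : ∀ n : ℕ, k ∈ Ideal.span {((1 + X) ^ p ^ n - 1 : PowerSeries ℤ_[p])} •
        (⊤ : Submodule (PowerSeries ℤ_[p]) (Fin r → PowerSeries ℤ_[p])) := by
      intro n
      obtain ⟨e⟩ := hfree n
      obtain ⟨hh, hhe⟩ := omega_eq_aux (p := p) n
      set In : Ideal (PowerSeries ℤ_[p]) :=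
        Ideal.span {((1 + X) ^ p ^ n - 1 : PowerSeries ℤ_[p])} with hIn
      set Pn : Submodule (PowerSeries ℤ_[p]) (Fin r → PowerSeries ℤ_[p]) := In • ⊤ with hPn
      set Nn : Submodule (PowerSeries ℤ_[p]) M := In • ⊤ with hNn
      have hle : Pn ≤ Submodule.comap φ Nn := by
        rw [← Submodule.map_le_iff_le_comap, hPn, Submodule.map_smul'']
        exact Submodule.smul_mono le_rfl le_top
      set φbar : ((Fin r → PowerSeries ℤ_[p]) ⧸ Pn) →ₗ[PowerSeries ℤ_[p]] (M ⧸ Nn) :=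
        Submodule.mapQ Pn Nn φ hle with hφbar
      have hφbar_surj : Function.Surjective φbar := by
        intro y
        obtain ⟨my, rfl⟩ := Submodule.Quotient.mk_surjective Nn y
        obtain ⟨x, rfl⟩ := hsurj my
        exact ⟨Submodule.Quotient.mk x, by rw [hφbar, Submodule.mapQ_apply]⟩
      -- the spanning family
      set w : Fin r × Fin (p ^ n) → ((Fin r → PowerSeries ℤ_[p]) ⧸ Pn) := fun ij =>
        Submodule.Quotient.mk (Pi.single ij.1 ((X : PowerSeries ℤ_[p]) ^ (ij.2 : ℕ))) with hw
      set ψ : (Fin r × Fin (p ^ n) → ℤ_[p]) →ₗ[ℤ_[p]] ((Fin r → PowerSeries ℤ_[p]) ⧸ Pn) :=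
        ∑ ij : Fin r × Fin (p ^ n),
          (LinearMap.toSpanSingleton ℤ_[p] _ (w ij)).comp (LinearMap.proj ij) with hψdef
      have hψ : ∀ c, ψ c = ∑ ij : Fin r × Fin (p ^ n), c ij • w ij := by
        intro c
        rw [hψdef]
        simp [LinearMap.toSpanSingleton_apply]
      have hψ_surj : Function.Surjective ψ := by
        intro y
        obtain ⟨u, rfl⟩ := Submodule.Quotient.mk_surjective Pn y
        have hdiv : ∀ i : Fin r, ∃ (c : Fin (p ^ n) → ℤ_[p]) (d : PowerSeries ℤ_[p]),
            u i = (∑ jj : Fin (p ^ n), c jj • (X : PowerSeries ℤ_[p]) ^ (jj : ℕ))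
              + d * (X ^ p ^ n + (p : PowerSeries ℤ_[p]) * hh) :=
          fun i => division (p ^ n) (pow_pos hp.pos n) hh (u i)
        choose cc dd hcd using hdiv
        refine ⟨fun ij => cc ij.1 ij.2, ?_⟩
        rw [hψ]
        have hdiff : u - (∑ ij : Fin r × Fin (p ^ n),
            Pi.single ij.1 (cc ij.1 ij.2 • (X : PowerSeries ℤ_[p]) ^ (ij.2 : ℕ)))
            = ∑ i : Fin r, ((1 + X) ^ p ^ n - 1 : PowerSeries ℤ_[p]) •
              (Pi.single i (dd i) : Fin r → PowerSeries ℤ_[p]) := by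
          funext t
          have hL : (∑ ij : Fin r × Fin (p ^ n),
              (Pi.single ij.1 (cc ij.1 ij.2 • (X : PowerSeries ℤ_[p]) ^ (ij.2 : ℕ)) :
                Fin r → PowerSeries ℤ_[p])) t
              = ∑ jj : Fin (p ^ n), cc t jj • (X : PowerSeries ℤ_[p]) ^ (jj : ℕ) := by
            rw [Finset.sum_apply, Fintype.sum_prod_type]
            simp only [Finset.sum_apply]
            rw [Finset.sum_eq_single t]
            · exact Finset.sum_congr rfl fun jj _ => Pi.single_eq_same _ _
            · intro i _ hne
              exact Finset.sum_eq_zero fun jj _ => Pi.single_eq_of_ne (Ne.symm hne) _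
            · intro ht; exact absurd (Finset.mem_univ t) ht
          have hR : (∑ i : Fin r, ((1 + X) ^ p ^ n - 1 : PowerSeries ℤ_[p]) •
              (Pi.single i (dd i) : Fin r → PowerSeries ℤ_[p])) t
              = ((1 + X) ^ p ^ n - 1 : PowerSeries ℤ_[p]) * dd t := by
            rw [Finset.sum_apply]
            rw [Finset.sum_eq_single t]
            · rw [Pi.smul_apply, Pi.single_eq_same, smul_eq_mul]
            · intro i _ hne
              rw [Pi.smul_apply, Pi.single_eq_of_ne (Ne.symm hne), smul_zero]
            · intro ht; exact absurd (Finset.mem_univ t) ht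
          rw [Pi.sub_apply, hL, hR, hcd t, hhe]
          ring
        have hmem : (∑ i : Fin r, ((1 + X) ^ p ^ n - 1 : PowerSeries ℤ_[p]) •
            (Pi.single i (dd i) : Fin r → PowerSeries ℤ_[p])) ∈ Pn := by
          refine Submodule.sum_mem _ fun i _ => ?_
          exact Submodule.smul_mem_smul (Ideal.subset_span (Set.mem_singleton _))
            Submodule.mem_top
        have h9 : Submodule.Quotient.mk (p := Pn) (∑ ij : Fin r × Fin (p ^ n),
              Pi.single ij.1 (cc ij.1 ij.2 • (X : PowerSeries ℤ_[p]) ^ (ij.2 : ℕ)))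
            = Submodule.Quotient.mk (p := Pn) u := by
          rw [Submodule.Quotient.eq]
          have : (∑ ij : Fin r × Fin (p ^ n),
              Pi.single ij.1 (cc ij.1 ij.2 • (X : PowerSeries ℤ_[p]) ^ (ij.2 : ℕ))) - u
              = -(u - (∑ ij : Fin r × Fin (p ^ n),
                Pi.single ij.1 (cc ij.1 ij.2 • (X : PowerSeries ℤ_[p]) ^ (ij.2 : ℕ)))) := by abel
          rw [this, hdiff]
          exact Submodule.neg_mem _ hmem
        have hmk : ∀ x : Fin r → PowerSeries ℤ_[p],
            Submodule.Quotient.mk (p := Pn) x = Pn.mkQ x := fun _ => rfl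
        calc ∑ ij : Fin r × Fin (p ^ n), cc ij.1 ij.2 • w ij
            = Submodule.Quotient.mk (p := Pn) (∑ ij : Fin r × Fin (p ^ n),
                (Pi.single ij.1 (cc ij.1 ij.2 • (X : PowerSeries ℤ_[p]) ^ (ij.2 : ℕ)) :
                  Fin r → PowerSeries ℤ_[p])) := by
              rw [hmk, map_sum]
              refine Finset.sum_congr rfl fun ij _ => ?_
              rw [hw]
              rw [← hmk, ← Submodule.Quotient.mk_smul Pn, ← Pi.single_smul, hmk]
          _ = Submodule.Quotient.mk (p := Pn) u := h9
      -- the ℤ_p-linear surjection composite and injectivity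
      set gmap : ((Fin r → PowerSeries ℤ_[p]) ⧸ Pn) →ₗ[ℤ_[p]] (Fin (r * p ^ n) → ℤ_[p]) :=
        e.toLinearMap.comp (φbar.restrictScalars ℤ_[p]) with hgmap
      have hg_surj : Function.Surjective gmap := by
        intro y
        obtain ⟨z, hz⟩ := hφbar_surj (e.symm y)
        exact ⟨z, by simp [hgmap, hz]⟩
      have hg_inj : Function.Injective gmap := by
        set eqv : (Fin (r * p ^ n) → ℤ_[p]) ≃ₗ[ℤ_[p]] (Fin r × Fin (p ^ n) → ℤ_[p]) :=
          LinearEquiv.funCongrLeft ℤ_[p] ℤ_[p]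
            (finProdFinEquiv : Fin r × Fin (p ^ n) ≃ Fin (r * p ^ n)) with heqv
        set E : (Fin (r * p ^ n) → ℤ_[p]) →ₗ[ℤ_[p]] (Fin (r * p ^ n) → ℤ_[p]) :=
          gmap.comp (ψ.comp eqv.toLinearMap) with hE
        have hEs : Function.Surjective E := by
          intro y
          obtain ⟨z1, hz1⟩ := hg_surj y
          obtain ⟨z2, hz2⟩ := hψ_surj z1
          exact ⟨eqv.symm z2, by simp [hE, hz2, hz1]⟩
        have hEi : Function.Injective E :=
          IsNoetherian.injective_of_surjective_endomorphism E hEs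
        intro x y hxy
        obtain ⟨cx, rfl⟩ := hψ_surj x
        obtain ⟨cy, rfl⟩ := hψ_surj y
        have h1 : E (eqv.symm cx) = E (eqv.symm cy) := by
          simp only [hE, LinearMap.comp_apply, LinearEquiv.coe_toLinearMap,
            LinearEquiv.apply_symm_apply]
          exact hxy
        have h2 := hEi h1
        have h3 : cx = cy := by
          have := congrArg eqv h2
          simpa using this
        rw [h3]
      have hmk0 : Submodule.Quotient.mk (p := Pn) k = 0 := by
        apply hg_inj
        have hφk : φ k = 0 := hk
        rw [map_zero]
        simp only [hgmap, LinearMap.comp_apply, LinearMap.restrictScalars_apply]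
        rw [hφbar, Submodule.mapQ_apply, hφk]
        simp
      exact (Submodule.Quotient.mk_eq_zero _).mp hmk0
    funext i
    refine eq_zero_of_omega_dvd (k i) fun n => ?_
    exact Ideal.mem_span_singleton.mp (pi_component_mem (hcomp n) i)
  exact ⟨(LinearEquiv.ofBijective φ ⟨LinearMap.ker_eq_bot.mp hker, hsurj⟩).symm⟩
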